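/- arXiv:2410.00611 — 2 statements merged into one kernel-verified Lean document; each statement's English description precedes it below -/
import Mathlib

section
/- Let p be a prime, n, m positive integers, and F : 𝔽_p^n → 𝔽_p^m a surjective function with Ξ(F) ≠ 0 such that |F⁻¹(0)| = p^{n−m} + sqrt((1 − p^{−m})·Nb_F) or |F⁻¹(0)| = p^{n−m} − sqrt((1 − p^{−m})·Nb_F). Then there exists a nonzero integer W such that: (a) W_F(b,0) = W for all b ∈ 𝔽_p^m with b ≠ 0; (b) p^m divides W; (c) Nb_F = ((p^m − 1)/p^m)·W²; and the preimage sizes are |F⁻¹(0)| = p^{n−m} + ((p^m − 1)/p^m)·W and |F⁻¹(β)| = p^{n−m} − W/p^m for every β ∈ 𝔽_p^m with β ≠ 0. -/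
open Finset

/-- The Walsh transform of `F : 𝔽_p^n → 𝔽_p^m` at `(b, a)`. -/
noncomputable def walsh (p n m : ℕ) [NeZero p] (F : (Fin n → ZMod p) → (Fin m → ZMod p))
    (b : Fin m → ZMod p) (a : Fin n → ZMod p) : ℂ :=
  ∑ x : Fin n → ZMod p,
    Complex.exp (2 * Real.pi * Complex.I *
      ((((∑ i, b i * F x i) - ∑ i, a i * x i).val : ℤ) : ℂ) / p)

/-- The imbalance `Nb_F = p^{-m} ∑_{b ≠ 0} |W_F(b,0)|²`. -/
noncomputable def imbalance (p n m : ℕ) [NeZero p]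
    (F : (Fin n → ZMod p) → (Fin m → ZMod p)) : ℝ :=
  ((p : ℝ) ^ m)⁻¹ *
    ∑ b ∈ univ.filter (fun b : Fin m → ZMod p => b ≠ 0),
      ‖walsh p n m F b 0‖ ^ 2

/-- The size of the preimage set `F⁻¹(β)`. -/
def fiberCard (p n m : ℕ) [NeZero p] (F : (Fin n → ZMod p) → (Fin m → ZMod p))
    (β : Fin m → ZMod p) : ℕ :=
  (univ.filter fun x => F x = β).card

/-- The size of the image set of `F`. -/
def imSize (p n m : ℕ) [NeZero p] (F : (Fin n → ZMod p) → (Fin m → ZMod p)) : ℕ :=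
  (univ.image F).card

/-- The imbalance defect
`Ξ(F) = sqrt((|im F| - 1)(|im F|·Nb_F - p^{2n-m}(p^m - |im F|)))/|im F|`. -/
noncomputable def xi (p n m : ℕ) [NeZero p]
    (F : (Fin n → ZMod p) → (Fin m → ZMod p)) : ℝ :=
  Real.sqrt (((imSize p n m F : ℝ) - 1) *
      ((imSize p n m F : ℝ) * imbalance p n m F -
        (p : ℝ) ^ (2 * (n : ℤ) - (m : ℤ)) * ((p : ℝ) ^ m - (imSize p n m F : ℝ)))) /
    (imSize p n m F : ℝ)


section Helpers

open Finset

lemma addChar_map_sum' {A M : Type*} [AddCommMonoid A] [CommMonoid M] (ψ : AddChar A M)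
    {ι : Type*} (s : Finset ι) (f : ι → A) :
    ψ (∑ i ∈ s, f i) = ∏ i ∈ s, ψ (f i) := by
  induction s using Finset.cons_induction with
  | empty => simp
  | cons a s ha ih => simp [Finset.sum_cons, Finset.prod_cons, AddChar.map_add_eq_mul, ih]

lemma sum_stdAddChar_mul' {p : ℕ} [NeZero p] (t : ZMod p) :
    ∑ u : ZMod p, ZMod.stdAddChar (u * t) = if t = 0 then (p : ℂ) else 0 := by
  split_ifs with h
  · simp only [h, mul_zero, AddChar.map_zero_eq_one, sum_const, card_univ, ZMod.card,
      nsmul_eq_mul, mul_one]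
  · simp_rw [mul_comm]
    exact AddChar.sum_eq_zero_of_ne_one (ZMod.isPrimitive_stdAddChar p h)

lemma sum_char_dot' {p : ℕ} [NeZero p] {m : ℕ} (v : Fin m → ZMod p) :
    ∑ b : Fin m → ZMod p, ZMod.stdAddChar (∑ i, b i * v i)
      = if v = 0 then ((p : ℂ) ^ m) else 0 := by
  have key : ∀ b : Fin m → ZMod p, ZMod.stdAddChar (∑ i, b i * v i)
      = ∏ i, ZMod.stdAddChar (b i * v i) := fun b =>
    addChar_map_sum' _ _ _
  simp_rw [key]
  rw [← Fintype.piFinset_univ, ← Finset.prod_univ_sum (fun _ => univ)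
    (fun i t => ZMod.stdAddChar (t * v i))]
  simp_rw [fun i => sum_stdAddChar_mul' (p := p) (v i)]
  by_cases hv : v = 0
  · simp [hv]
  · obtain ⟨i, hi⟩ : ∃ i, v i ≠ 0 := by
      by_contra h
      push_neg at h
      exact hv (funext h)
    rw [if_neg hv]
    exact Finset.prod_eq_zero (mem_univ i) (by simp [hi])

lemma walsh_eq_char' (p n m : ℕ) [NeZero p] (F : (Fin n → ZMod p) → (Fin m → ZMod p))
    (b : Fin m → ZMod p) :
    walsh p n m F b 0 = ∑ x : Fin n → ZMod p, ZMod.stdAddChar (∑ i, b i * F x i) := by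
  unfold walsh
  refine Finset.sum_congr rfl fun x _ => ?_
  have h0 : ∑ i, (0 : Fin n → ZMod p) i * x i = 0 := by simp
  rw [h0, sub_zero]
  set t := ∑ i, b i * F x i with ht
  conv_rhs => rw [show t = ((t.val : ℤ) : ZMod p) by push_cast [ZMod.natCast_zmod_val]; rfl]
  rw [ZMod.stdAddChar_coe]

lemma sum_walsh_char' (p n m : ℕ) [NeZero p] (F : (Fin n → ZMod p) → (Fin m → ZMod p))
    (β : Fin m → ZMod p) :
    ∑ b : Fin m → ZMod p, walsh p n m F b 0 * ZMod.stdAddChar (-∑ i, b i * β i)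
      = (p : ℂ) ^ m * (fiberCard p n m F β : ℂ) := by
  simp_rw [walsh_eq_char', Finset.sum_mul]
  rw [Finset.sum_comm]
  have key : ∀ (x : Fin n → ZMod p) (b : Fin m → ZMod p),
      ZMod.stdAddChar (∑ i, b i * F x i) *
      ZMod.stdAddChar (-∑ i, b i * β i)
      = ZMod.stdAddChar (∑ i, b i * (F x i - β i)) := by
    intro x b
    rw [← AddChar.map_add_eq_mul]
    congr 1
    rw [← sub_eq_add_neg, ← Finset.sum_sub_distrib]
    exact Finset.sum_congr rfl fun i _ => (mul_sub _ _ _).symm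
  simp_rw [key]
  have hv : ∀ x : Fin n → ZMod p,
      (∑ b : Fin m → ZMod p, ZMod.stdAddChar (∑ i, b i * (F x i - β i)))
        = if F x = β then (p : ℂ) ^ m else 0 := by
    intro x
    rw [sum_char_dot' (fun i => F x i - β i)]
    by_cases hx : F x = β
    · rw [if_pos _, if_pos hx]
      funext i; simp [hx]
    · rw [if_neg _, if_neg hx]
      simp only [funext_iff, Pi.zero_apply, sub_eq_zero]
      exact fun h => hx (funext h)
  simp_rw [hv]
  rw [← Finset.sum_filter, Finset.sum_const, nsmul_eq_mul, mul_comm]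
  rfl

lemma walsh_zero' (p n m : ℕ) [NeZero p] (F : (Fin n → ZMod p) → (Fin m → ZMod p)) :
    walsh p n m F 0 0 = (p : ℂ) ^ n := by
  rw [walsh_eq_char']
  simp only [Pi.zero_apply, zero_mul, Finset.sum_const_zero, AddChar.map_zero_eq_one,
    Finset.sum_const, Finset.card_univ, nsmul_eq_mul, mul_one]
  simp [ZMod.card]

lemma sum_char_neg' {p m : ℕ} [NeZero p] {β : Fin m → ZMod p} (hβ : β ≠ 0) :
    ∑ b ∈ univ.filter (fun b : Fin m → ZMod p => b ≠ 0),
      ZMod.stdAddChar (-∑ i, b i * β i) = -1 := by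
  have hrw : ∀ b : Fin m → ZMod p,
      ZMod.stdAddChar (-∑ i, b i * β i) = ZMod.stdAddChar (∑ i, b i * (-β i)) := by
    intro b
    congr 1
    rw [← Finset.sum_neg_distrib]
    exact Finset.sum_congr rfl fun i _ => (mul_neg _ _).symm
  have h0 : ∑ b : Fin m → ZMod p, ZMod.stdAddChar (-∑ i, b i * β i) = 0 := by
    simp_rw [hrw]
    rw [sum_char_dot' (fun i => -β i), if_neg]
    intro h
    apply hβ
    funext i
    have := congrFun h i
    simpa using this
  rw [← Finset.sum_filter_add_sum_filter_not univ (fun b : Fin m → ZMod p => b ≠ 0)] at h0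
  have h2 : univ.filter (fun b : Fin m → ZMod p => ¬ b ≠ 0) = {0} := by
    ext b; simp
  rw [h2, Finset.sum_singleton] at h0
  have h3 : ZMod.stdAddChar (-∑ i, (0 : Fin m → ZMod p) i * β i) = 1 := by
    simp
  rw [h3] at h0
  linear_combination h0

end Helpers

theorem almostBalanced_surjective_walsh (p n m : ℕ) [NeZero p] (hp : p.Prime)
    (hn : 0 < n) (hm : 0 < m)
    (F : (Fin n → ZMod p) → (Fin m → ZMod p))
    (hsurj : Function.Surjective F)
    (hxi : xi p n m F ≠ 0)
    (h0 : (fiberCard p n m F 0 : ℝ)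
            = (p : ℝ) ^ ((n : ℤ) - (m : ℤ))
              + Real.sqrt ((1 - ((p : ℝ) ^ m)⁻¹) * imbalance p n m F) ∨
          (fiberCard p n m F 0 : ℝ)
            = (p : ℝ) ^ ((n : ℤ) - (m : ℤ))
              - Real.sqrt ((1 - ((p : ℝ) ^ m)⁻¹) * imbalance p n m F)) :
    ∃ W : ℤ, W ≠ 0 ∧
      (∀ b : Fin m → ZMod p, b ≠ 0 → walsh p n m F b 0 = (W : ℂ)) ∧
      ((p : ℤ) ^ m ∣ W) ∧
      imbalance p n m F = (((p : ℝ) ^ m - 1) / (p : ℝ) ^ m) * (W : ℝ) ^ 2 ∧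
      (fiberCard p n m F 0 : ℝ)
        = (p : ℝ) ^ ((n : ℤ) - (m : ℤ)) + (((p : ℝ) ^ m - 1) / (p : ℝ) ^ m) * (W : ℝ) ∧
      ∀ β : Fin m → ZMod p, β ≠ 0 →
        (fiberCard p n m F β : ℝ)
          = (p : ℝ) ^ ((n : ℤ) - (m : ℤ)) - (W : ℝ) / (p : ℝ) ^ m := by
  haveI : Fact p.Prime := ⟨hp⟩
  classical
  set T : Finset (Fin m → ZMod p) := univ.filter (fun b => b ≠ 0) with hT
  have hpR : (0:ℝ) < p := by exact_mod_cast hp.pos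
  have hp2 : (2:ℝ) ≤ (p:ℝ) := by exact_mod_cast hp.two_le
  have hpm2 : (2:ℝ) ≤ (p:ℝ)^m :=
    le_trans hp2 (le_self_pow₀ (by linarith) hm.ne')
  have hpmpos : (0:ℝ) < (p:ℝ)^m := by positivity
  have hcardfun : Fintype.card (Fin m → ZMod p) = p ^ m := by
    simp [ZMod.card]
  have hKnat : T.card = p ^ m - 1 := by
    rw [hT, Finset.filter_ne', Finset.card_erase_of_mem (mem_univ 0), Finset.card_univ,
      hcardfun]
  have hK : (T.card : ℝ) = (p:ℝ)^m - 1 := by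
    rw [hKnat]
    have : 1 ≤ p ^ m := Nat.one_le_pow _ _ hp.pos
    push_cast [Nat.cast_sub this]
    ring
  have h2 : univ.filter (fun b : Fin m → ZMod p => ¬ b ≠ 0) = {0} := by
    ext b; simp
  -- main identity at β = 0
  have hS : ∑ b ∈ T, walsh p n m F b 0
      = (p:ℂ)^m * (fiberCard p n m F 0 : ℂ) - (p:ℂ)^n := by
    have h := sum_walsh_char' p n m F 0
    simp only [Pi.zero_apply, mul_zero, Finset.sum_const_zero, neg_zero,
      AddChar.map_zero_eq_one, mul_one] at h
    rw [← Finset.sum_filter_add_sum_filter_not univ (fun b : Fin m → ZMod p => b ≠ 0),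
      h2, Finset.sum_singleton, walsh_zero'] at h
    rw [← hT] at h
    linear_combination h
  have hNb : ∑ b ∈ T, Complex.normSq (walsh p n m F b 0) = (p:ℝ)^m * imbalance p n m F := by
    unfold imbalance
    rw [← mul_assoc, mul_inv_cancel₀ (ne_of_gt hpmpos), one_mul]
    exact Finset.sum_congr rfl fun b _ => (Complex.sq_norm _).symm
  have hNbnn : 0 ≤ imbalance p n m F := by
    unfold imbalance
    positivity
  set N0 : ℝ := (fiberCard p n m F 0 : ℝ) with hN0def
  set s : ℝ := (p:ℝ)^m * N0 - (p:ℝ)^n with hs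
  have hSs : ∑ b ∈ T, walsh p n m F b 0 = (s:ℝ) := by
    rw [hS, hs, hN0def]
    push_cast
    ring
  have hzp : (p:ℝ)^((n:ℤ)-(m:ℤ)) = (p:ℝ)^n / (p:ℝ)^m := by
    rw [zpow_sub₀ (ne_of_gt hpR), zpow_natCast, zpow_natCast]
  have harg : 0 ≤ (1 - ((p:ℝ)^m)⁻¹) * imbalance p n m F := by
    apply mul_nonneg _ hNbnn
    have : ((p:ℝ)^m)⁻¹ ≤ 1 := by
      rw [inv_le_one_iff₀]
      right; linarith
    linarith
  have hsq : s^2 = ((p:ℝ)^m - 1) * ((p:ℝ)^m * imbalance p n m F) := by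
    have h1 : (N0 - (p:ℝ)^((n:ℤ)-(m:ℤ)))^2 = (1 - ((p:ℝ)^m)⁻¹) * imbalance p n m F := by
      rcases h0 with h | h
      · have hd : N0 - (p:ℝ)^((n:ℤ)-(m:ℤ))
            = Real.sqrt ((1 - ((p:ℝ)^m)⁻¹) * imbalance p n m F) := by
          rw [h]; ring
        rw [hd, Real.sq_sqrt harg]
      · have hd : N0 - (p:ℝ)^((n:ℤ)-(m:ℤ))
            = -Real.sqrt ((1 - ((p:ℝ)^m)⁻¹) * imbalance p n m F) := by
          rw [h]; ring
        rw [hd, neg_sq, Real.sq_sqrt harg]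
    have hs2 : s = (p:ℝ)^m * (N0 - (p:ℝ)^((n:ℤ)-(m:ℤ))) := by
      rw [hzp, hs]
      field_simp
    rw [hs2, mul_pow, h1]
    field_simp
  set Kr : ℝ := (p:ℝ)^m - 1 with hKr
  have hKrpos : (0:ℝ) < Kr := by rw [hKr]; linarith
  set c : ℝ := s / Kr with hc
  have hsc : s = Kr * c := by
    rw [hc]; field_simp
  -- equality case of Cauchy–Schwarz
  have hall : ∀ b ∈ T, walsh p n m F b 0 = ((c:ℝ) : ℂ) := by
    have expand : ∀ z : ℂ, Complex.normSq (z - (c:ℝ)) = Complex.normSq z - 2*c*z.re + c^2 := by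
      intro z
      simp only [Complex.normSq_apply, Complex.sub_re, Complex.sub_im, Complex.ofReal_re,
        Complex.ofReal_im, sub_zero]
      ring
    have hre : ∑ b ∈ T, (walsh p n m F b 0).re = s := by
      have := congrArg Complex.re hSs
      rwa [Complex.re_sum] at this
    have hzero : ∑ b ∈ T, Complex.normSq (walsh p n m F b 0 - (c:ℝ)) = 0 := by
      simp_rw [expand]
      rw [Finset.sum_add_distrib, Finset.sum_sub_distrib, ← Finset.mul_sum, hre,
        Finset.sum_const, nsmul_eq_mul, hNb, hK]
      have h3 : (p:ℝ)^m * imbalance p n m F = Kr * c^2 :=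
        mul_left_cancel₀ hKrpos.ne' (by rw [← hsq, hsc]; ring)
      rw [h3, hsc]
      ring
    intro b hb
    have h1 := (Finset.sum_eq_zero_iff_of_nonneg
      (fun b _ => Complex.normSq_nonneg _)).1 hzero b hb
    have h2' := Complex.normSq_eq_zero.1 h1
    exact sub_eq_zero.1 h2'
  -- value of fibers over nonzero β
  have hBeta : ∀ β : Fin m → ZMod p, β ≠ 0 →
      (p:ℝ)^m * (fiberCard p n m F β : ℝ) = (p:ℝ)^n - c := by
    intro β hβ
    have h := sum_walsh_char' p n m F β
    rw [← Finset.sum_filter_add_sum_filter_not univ (fun b : Fin m → ZMod p => b ≠ 0),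
      h2, Finset.sum_singleton] at h
    have hz : walsh p n m F 0 0 * ZMod.stdAddChar (-∑ i, (0 : Fin m → ZMod p) i * β i)
        = (p:ℂ)^n := by
      rw [walsh_zero']
      simp
    rw [hz, ← hT] at h
    have hrest : ∑ b ∈ T, walsh p n m F b 0 * ZMod.stdAddChar (-∑ i, b i * β i)
        = ((c:ℝ) : ℂ) * ∑ b ∈ T, ZMod.stdAddChar (-∑ i, b i * β i) := by
      rw [Finset.mul_sum]
      exact Finset.sum_congr rfl fun b hb => by rw [hall b hb]
    rw [hrest, hT, sum_char_neg' hβ] at h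
    have h' : (((p:ℝ)^m * (fiberCard p n m F β : ℝ) : ℝ) : ℂ)
        = (((p:ℝ)^n - c : ℝ) : ℂ) := by
      push_cast
      linear_combination -h
    exact_mod_cast h'
  -- the integer W
  have hFm : Nonempty (Fin m) := ⟨⟨0, hm⟩⟩
  obtain ⟨i0⟩ := hFm
  set β₀ : Fin m → ZMod p := fun _ => 1 with hβ₀def
  have hβ₀ : β₀ ≠ 0 := by
    intro h
    exact one_ne_zero (congrFun h i0)
  set W : ℤ := (p:ℤ)^n - (p:ℤ)^m * (fiberCard p n m F β₀ : ℤ) with hW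
  have hcW : c = (W:ℝ) := by
    have := hBeta β₀ hβ₀
    rw [hW]
    push_cast
    linarith
  have hmn : m ≤ n := by
    have hcard := Fintype.card_le_of_surjective F hsurj
    rw [hcardfun] at hcard
    have hcard' : p ^ m ≤ p ^ n := by
      simpa [ZMod.card] using hcard
    exact (Nat.pow_le_pow_iff_right hp.one_lt).1 hcard'
  -- imbalance formula
  have himb : imbalance p n m F = (((p:ℝ)^m - 1) / (p:ℝ)^m) * (W:ℝ)^2 := by
    have hsum : ∑ b ∈ T, Complex.normSq (walsh p n m F b 0) = Kr * c^2 := by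
      rw [← hK]
      rw [Finset.sum_congr rfl (fun b hb => by rw [hall b hb])]
      rw [Finset.sum_const, nsmul_eq_mul]
      simp [Complex.normSq_ofReal, sq]
    rw [hsum] at hNb
    rw [← hcW, ← hKr, div_mul_eq_mul_div, eq_div_iff hpmpos.ne']
    linarith [hNb]
  -- W ≠ 0
  have hWne : W ≠ 0 := by
    intro hW0
    apply hxi
    have himS : (imSize p n m F : ℝ) = (p:ℝ)^m := by
      unfold imSize
      rw [Finset.image_univ_of_surjective hsurj, Finset.card_univ, hcardfun]
      push_cast
      ring
    have himb0 : imbalance p n m F = 0 := by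
      rw [himb, hW0]
      simp
    unfold xi
    rw [himS, himb0]
    simp
  refine ⟨W, hWne, ?_, ?_, himb, ?_, ?_⟩
  · intro b hb
    rw [hall b (by rw [hT]; simp [hb]), hcW]
    norm_cast
  · rw [hW]
    exact dvd_sub (pow_dvd_pow _ hmn) (Dvd.intro _ rfl)
  · -- fiber at 0
    have : N0 = (p:ℝ)^((n:ℤ)-(m:ℤ)) + (((p:ℝ)^m - 1) / (p:ℝ)^m) * (W:ℝ) := by
      have hs' : (p:ℝ)^m * N0 - (p:ℝ)^n = Kr * (W:ℝ) := by
        rw [← hcW, ← hsc, hs]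
      rw [hzp, ← hKr]
      field_simp at hs' ⊢
      linarith
    exact this
  · intro β hβ
    have h := hBeta β hβ
    rw [hcW] at h
    rw [hzp]
    field_simp at h ⊢
    linarith
end

section
/- Let p be a prime, n, m positive integers, and F : 𝔽_p^n → 𝔽_p^m a surjective, almost balanced, plateaued function. Then there exists t ≥ 0 such that n + t is even, every nonzero component of F is t-plateaued (i.e., F is plateaued with single amplitude p^{(n+t)/2}), and m ≤ (n + t)/2. -/
open Finset

/-- The component `F_b` is `t`-plateaued: `|W_F(b,a)| ∈ {0, p^{(n+t)/2}}` for all `a`. -/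
def IsTPlateaued (p n m : ℕ) [NeZero p] (F : (Fin n → ZMod p) → (Fin m → ZMod p))
    (b : Fin m → ZMod p) (t : ℕ) : Prop :=
  ∀ a : Fin n → ZMod p,
    ‖walsh p n m F b a‖ = 0 ∨
    ‖walsh p n m F b a‖ = Real.sqrt ((p : ℝ) ^ (n + t))

/-- `F` is plateaued: every nonzero component is `t_b`-plateaued for some `t_b`. -/
def IsPlateaued (p n m : ℕ) [NeZero p] (F : (Fin n → ZMod p) → (Fin m → ZMod p)) : Prop :=
  ∀ b : Fin m → ZMod p, b ≠ 0 → ∃ t : ℕ, IsTPlateaued p n m F b t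

/-- `F` (with nonzero imbalance defect) is almost balanced: some preimage set size attains
`p^n/|im F| ± Ξ(F)`. -/
def IsAlmostBalanced (p n m : ℕ) [NeZero p]
    (F : (Fin n → ZMod p) → (Fin m → ZMod p)) : Prop :=
  xi p n m F ≠ 0 ∧
  ∃ β : Fin m → ZMod p,
    (fiberCard p n m F β : ℝ) = (p : ℝ) ^ n / (imSize p n m F : ℝ) + xi p n m F ∨
    (fiberCard p n m F β : ℝ) = (p : ℝ) ^ n / (imSize p n m F : ℝ) - xi p n m F


section Aux
noncomputable def chi (p : ℕ) (z : ZMod p) : ℂ :=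
  Complex.exp (2 * Real.pi * Complex.I * ((z.val : ℤ) : ℂ) / p)

lemma chi_eq_pow (p : ℕ) (z : ZMod p) :
    chi p z = Complex.exp (2 * Real.pi * Complex.I / p) ^ z.val := by
  rw [chi, ← Complex.exp_nat_mul]
  congr 1
  push_cast
  ring

lemma zeta_pow_p (p : ℕ) (hp : p ≠ 0) :
    Complex.exp (2 * Real.pi * Complex.I / p) ^ p = 1 :=
  (Complex.isPrimitiveRoot_exp p hp).pow_eq_one

lemma zeta_pow_mod (p : ℕ) (hp : p ≠ 0) (a : ℕ) :
    Complex.exp (2 * Real.pi * Complex.I / p) ^ a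
      = Complex.exp (2 * Real.pi * Complex.I / p) ^ (a % p) := by
  conv_lhs => rw [← Nat.div_add_mod a p]
  rw [pow_add, pow_mul, zeta_pow_p p hp, one_pow, one_mul]

lemma chi_zero (p : ℕ) [NeZero p] : chi p 0 = 1 := by
  simp [chi_eq_pow]

lemma chi_add (p : ℕ) [NeZero p] (x y : ZMod p) : chi p (x + y) = chi p x * chi p y := by
  have hp : p ≠ 0 := NeZero.ne p
  rw [chi_eq_pow, chi_eq_pow, chi_eq_pow, ← pow_add, ZMod.val_add,
    ← zeta_pow_mod p hp]

lemma chi_sum (p : ℕ) [NeZero p] {ι : Type*} (s : Finset ι) (f : ι → ZMod p) :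
    chi p (∑ i ∈ s, f i) = ∏ i ∈ s, chi p (f i) := by
  classical
  induction s using Finset.induction with
  | empty => simp [chi_zero]
  | insert _ _ h ih => rw [Finset.sum_insert h, Finset.prod_insert h, chi_add, ih]

lemma sum_chi (p : ℕ) [NeZero p] (hp : 1 < p) : ∑ z : ZMod p, chi p z = 0 := by
  have hp0 : p ≠ 0 := NeZero.ne p
  set ζ := Complex.exp (2 * Real.pi * Complex.I / p) with hζ
  have hne : ζ ≠ 1 := (Complex.isPrimitiveRoot_exp p hp0).ne_one hp
  have h1 : ∑ z : ZMod p, chi p z = ∑ k ∈ Finset.range p, ζ ^ k := by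
    rw [Finset.sum_bij (fun (z : ZMod p) _ => z.val)]
    · intro z _; exact Finset.mem_range.2 (ZMod.val_lt z)
    · intro a _ b _ h; exact ZMod.val_injective p h
    · intro k hk
      exact ⟨(k : ZMod p), Finset.mem_univ _, ZMod.val_cast_of_lt (Finset.mem_range.1 hk)⟩
    · intro z _; rw [chi_eq_pow]
  rw [h1, geom_sum_eq hne, zeta_pow_p p hp0, sub_self, zero_div]

lemma sum_chi_mul (p : ℕ) [NeZero p] (hp : p.Prime) {u : ZMod p} (hu : u ≠ 0) :
    ∑ z : ZMod p, chi p (u * z) = 0 := by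
  haveI : Fact p.Prime := ⟨hp⟩
  have := Fintype.sum_bijective (u * ·) (mulLeft_bijective₀ u hu)
    (fun z => chi p (u * z)) (chi p) (fun x => rfl)
  rw [this]
  exact sum_chi p hp.one_lt

lemma sum_chi_dot (p : ℕ) [NeZero p] (hp : p.Prime) {k : ℕ} {v : Fin k → ZMod p}
    (hv : v ≠ 0) : ∑ w : Fin k → ZMod p, chi p (∑ i, v i * w i) = 0 := by
  classical
  have h1 : ∀ w : Fin k → ZMod p, chi p (∑ i, v i * w i) = ∏ i, chi p (v i * w i) :=
    fun w => chi_sum p _ _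
  simp only [h1]
  rw [← Fintype.piFinset_univ, ← Finset.prod_univ_sum (fun _ => Finset.univ)
    (fun i z => chi p (v i * z))]
  obtain ⟨i0, hi0⟩ : ∃ i, v i ≠ 0 := by
    by_contra h
    push_neg at h
    exact hv (funext h)
  exact Finset.prod_eq_zero (Finset.mem_univ i0) (sum_chi_mul p hp hi0)

lemma sum_chi_dot' (p : ℕ) [NeZero p] (hp : p.Prime) {k : ℕ} (v : Fin k → ZMod p) :
    ∑ w : Fin k → ZMod p, chi p (∑ i, w i * v i)
      = if v = 0 then (p : ℂ) ^ k else 0 := by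
  classical
  have hmc : ∀ w : Fin k → ZMod p, (∑ i, w i * v i) = ∑ i, v i * w i := by
    intro w; exact Finset.sum_congr rfl fun i _ => mul_comm _ _
  simp only [hmc]
  split_ifs with h
  · subst h
    simp only [Pi.zero_apply, mul_zero, zero_mul, Finset.sum_const_zero, chi_zero]
    rw [Finset.sum_const, Finset.card_univ]
    simp [ZMod.card]
  · exact sum_chi_dot p hp h

lemma conj_chi (p : ℕ) [NeZero p] (z : ZMod p) :
    (starRingEnd ℂ) (chi p z) = chi p (-z) := by
  have h1 : chi p (-z) * chi p z = 1 := by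
    rw [← chi_add, neg_add_cancel, chi_zero]
  have h2 : (starRingEnd ℂ) (chi p z) * chi p z = 1 := by
    rw [chi, ← Complex.exp_conj, ← Complex.exp_add]
    have : (starRingEnd ℂ) (2 * ↑Real.pi * Complex.I * ((z.val : ℤ) : ℂ) / ↑p)
        = -(2 * ↑Real.pi * Complex.I * ((z.val : ℤ) : ℂ) / ↑p) := by
      simp only [map_div₀, map_mul, map_ofNat, Complex.conj_ofReal, Complex.conj_I,
        map_intCast, map_natCast]
      ring
    rw [this, neg_add_cancel, Complex.exp_zero]
  have hne : chi p z ≠ 0 := by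
    intro h
    rw [h, mul_zero] at h1
    exact one_ne_zero h1.symm
  rw [eq_inv_of_mul_eq_one_left h1, eq_inv_of_mul_eq_one_left h2]

lemma walsh_zero_eq (p n m : ℕ) [NeZero p] (F : (Fin n → ZMod p) → (Fin m → ZMod p))
    (b : Fin m → ZMod p) :
    walsh p n m F b 0 = ∑ β : Fin m → ZMod p,
      (fiberCard p n m F β : ℂ) * chi p (∑ i, b i * β i) := by
  classical
  have h1 : walsh p n m F b 0 = ∑ x : Fin n → ZMod p, chi p (∑ i, b i * F x i) := by
    unfold walsh chi
    refine Finset.sum_congr rfl fun x _ => ?_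
    congr 2
    simp
  rw [h1, ← Finset.sum_fiberwise' Finset.univ F (fun β => chi p (∑ i, b i * β i))]
  refine Finset.sum_congr rfl fun β _ => ?_
  rw [Finset.sum_const, fiberCard, nsmul_eq_mul]

lemma card_V (p k : ℕ) [NeZero p] : Fintype.card (Fin k → ZMod p) = p ^ k := by
  simp [ZMod.card]

lemma sum_fiberCard (p n m : ℕ) [NeZero p] (F : (Fin n → ZMod p) → (Fin m → ZMod p)) :
    ∑ β : Fin m → ZMod p, fiberCard p n m F β = p ^ n := by
  classical
  have := Finset.sum_fiberwise' Finset.univ F (fun _ : Fin m → ZMod p => (1 : ℕ))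
  simpa [fiberCard, card_V] using this

lemma imbalance_eq (p n m : ℕ) [NeZero p] (hp : p.Prime)
    (F : (Fin n → ZMod p) → (Fin m → ZMod p)) :
    imbalance p n m F = ∑ β : Fin m → ZMod p,
      ((fiberCard p n m F β : ℝ) - (p : ℝ) ^ n / (p : ℝ) ^ m) ^ 2 := by
  classical
  set r : ℝ := (p : ℝ) ^ n / (p : ℝ) ^ m with hr
  set δ : (Fin m → ZMod p) → ℝ := fun β => (fiberCard p n m F β : ℝ) - r with hδ
  set G : (Fin m → ZMod p) → ℂ :=
    fun b => ∑ β : Fin m → ZMod p, ((δ β : ℝ) : ℂ) * chi p (∑ i, b i * β i) with hG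
  have hp0 : (0 : ℝ) < (p : ℝ) := by exact_mod_cast hp.pos
  have hpR : (0 : ℝ) < (p : ℝ) ^ m := by positivity
  -- sum of deltas is zero
  have hsumδ : ∑ β : Fin m → ZMod p, δ β = 0 := by
    have h1 : ∑ β : Fin m → ZMod p, (fiberCard p n m F β : ℝ) = (p : ℝ) ^ n := by
      rw [← Nat.cast_sum, sum_fiberCard]
      push_cast
      ring
    have h2 : (Fintype.card (Fin m → ZMod p) : ℝ) = (p : ℝ) ^ m := by
      rw [card_V]; push_cast; ring
    simp only [hδ, Finset.sum_sub_distrib, h1, Finset.sum_const, Finset.card_univ,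
      nsmul_eq_mul, h2, hr]
    field_simp
    ring
  -- walsh at nonzero b equals G
  have hwalsh : ∀ b : Fin m → ZMod p, b ≠ 0 → walsh p n m F b 0 = G b := by
    intro b hb
    rw [walsh_zero_eq, hG]
    have : ∀ β : Fin m → ZMod p,
        (fiberCard p n m F β : ℂ) * chi p (∑ i, b i * β i)
          = ((δ β : ℝ) : ℂ) * chi p (∑ i, b i * β i)
            + (r : ℂ) * chi p (∑ i, b i * β i) := by
      intro β
      have : (fiberCard p n m F β : ℂ) = ((δ β : ℝ) : ℂ) + (r : ℂ) := by
        simp only [hδ]; push_cast; ring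
      rw [this]; ring
    rw [Finset.sum_congr rfl fun β _ => this β, Finset.sum_add_distrib,
      ← Finset.mul_sum, sum_chi_dot p hp hb, mul_zero, add_zero]
  -- G at zero is zero
  have hG0 : G 0 = 0 := by
    rw [hG]
    simp only [Pi.zero_apply, zero_mul, Finset.sum_const_zero, chi_zero, mul_one]
    rw [← Complex.ofReal_sum, hsumδ, Complex.ofReal_zero]
  -- Parseval-type identity
  have hpar : ∑ b : Fin m → ZMod p, Complex.normSq (G b)
      = (p : ℝ) ^ m * ∑ β : Fin m → ZMod p, δ β ^ 2 := by
    have key : ∑ b : Fin m → ZMod p, (G b * (starRingEnd ℂ) (G b))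
        = ((p : ℝ) ^ m : ℂ) * ∑ β : Fin m → ZMod p, ((δ β : ℝ) : ℂ) ^ 2 := by
      have expand : ∀ b : Fin m → ZMod p, G b * (starRingEnd ℂ) (G b)
          = ∑ β : Fin m → ZMod p, ∑ γ : Fin m → ZMod p,
              ((δ β : ℝ) : ℂ) * ((δ γ : ℝ) : ℂ) * chi p (∑ i, b i * (β - γ) i) := by
        intro b
        rw [hG, map_sum, Finset.sum_mul_sum]
        refine Finset.sum_congr rfl fun β _ => Finset.sum_congr rfl fun γ _ => ?_
        rw [map_mul, Complex.conj_ofReal, conj_chi]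
        have harg : (∑ i, b i * β i) + -(∑ i, b i * γ i) = ∑ i, b i * (β - γ) i := by
          rw [← Finset.sum_neg_distrib, ← Finset.sum_add_distrib]
          refine Finset.sum_congr rfl fun i _ => ?_
          simp only [Pi.sub_apply, mul_sub, mul_neg]
          ring
        have hchi : chi p (∑ i, b i * β i) * chi p (-∑ i, b i * γ i)
            = chi p (∑ i, b i * (β - γ) i) := by
          rw [← chi_add, harg]
        rw [← hchi]
        ring
      simp only [expand]
      rw [Finset.sum_comm]
      have swap : ∀ β : Fin m → ZMod p, ∑ b : Fin m → ZMod p, ∑ γ : Fin m → ZMod p,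
          ((δ β : ℝ) : ℂ) * ((δ γ : ℝ) : ℂ) * chi p (∑ i, b i * (β - γ) i)
          = ((δ β : ℝ) : ℂ) ^ 2 * (p : ℂ) ^ m := by
        intro β
        rw [Finset.sum_comm]
        have inner : ∀ γ : Fin m → ZMod p,
            ∑ b : Fin m → ZMod p, ((δ β : ℝ) : ℂ) * ((δ γ : ℝ) : ℂ)
              * chi p (∑ i, b i * (β - γ) i)
            = ((δ β : ℝ) : ℂ) * ((δ γ : ℝ) : ℂ)
              * (if β - γ = 0 then (p : ℂ) ^ m else 0) := by
          intro γ
          rw [← Finset.mul_sum, sum_chi_dot' p hp (β - γ)]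
        simp only [inner]
        rw [Finset.sum_eq_single β]
        · simp [sq]
        · intro γ _ hne
          have : ¬ (β - γ = 0) := sub_ne_zero.mpr (Ne.symm hne)
          simp [this]
        · intro h
          exact absurd (Finset.mem_univ β) h
      rw [Finset.sum_congr rfl fun β _ => swap β, ← Finset.sum_mul]
      push_cast
      ring
    have lhs_eq : ∑ b : Fin m → ZMod p, (G b * (starRingEnd ℂ) (G b))
        = ((∑ b : Fin m → ZMod p, Complex.normSq (G b) : ℝ) : ℂ) := by
      rw [Complex.ofReal_sum]
      exact Finset.sum_congr rfl fun b _ => Complex.mul_conj (G b)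
    rw [lhs_eq] at key
    have rhs_eq : ((p : ℝ) ^ m : ℂ) * ∑ β : Fin m → ZMod p, ((δ β : ℝ) : ℂ) ^ 2
        = (((p : ℝ) ^ m * ∑ β : Fin m → ZMod p, δ β ^ 2 : ℝ) : ℂ) := by
      push_cast
      ring
    rw [rhs_eq] at key
    exact_mod_cast key
  -- put together
  rw [imbalance]
  have hfilter : Finset.univ.filter (fun b : Fin m → ZMod p => b ≠ 0)
      = Finset.univ.erase 0 := Finset.filter_ne' _ _
  have habs : ∀ b ∈ Finset.univ.erase (0 : Fin m → ZMod p),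
      ‖walsh p n m F b 0‖ ^ 2 = Complex.normSq (G b) := by
    intro b hb
    rw [hwalsh b (Finset.ne_of_mem_erase hb), Complex.sq_norm]
  rw [hfilter, Finset.sum_congr rfl habs]
  have herase : ∑ b ∈ Finset.univ.erase (0 : Fin m → ZMod p), Complex.normSq (G b)
      = ∑ b : Fin m → ZMod p, Complex.normSq (G b) - Complex.normSq (G 0) := by
    rw [Finset.sum_erase_eq_sub (Finset.mem_univ _)]
  rw [herase, hG0, map_zero, sub_zero, hpar, ← mul_assoc, inv_mul_cancel₀ (ne_of_gt hpR),
    one_mul]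

lemma abs_chi (p : ℕ) [NeZero p] (z : ZMod p) : ‖chi p z‖ = 1 := by
  have h1 : chi p z * (starRingEnd ℂ) (chi p z) = 1 := by
    rw [conj_chi, ← chi_add, add_neg_cancel, chi_zero]
  rw [Complex.mul_conj] at h1
  have h2 : Complex.normSq (chi p z) = 1 := by exact_mod_cast h1
  rw [Complex.norm_def, h2, Real.sqrt_one]

lemma fiberCard_pos (p n m : ℕ) [NeZero p] (F : (Fin n → ZMod p) → (Fin m → ZMod p))
    (hsurj : Function.Surjective F) (β : Fin m → ZMod p) :
    0 < fiberCard p n m F β := by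
  classical
  obtain ⟨x, hx⟩ := hsurj β
  rw [fiberCard, Finset.card_pos]
  exact ⟨x, Finset.mem_filter.2 ⟨Finset.mem_univ x, hx⟩⟩

end Aux

set_option maxHeartbeats 1000000 in
theorem almostBalanced_plateaued_single_amplitude (p n m : ℕ) [NeZero p] (hp : p.Prime)
    (hn : 0 < n) (hm : 0 < m)
    (F : (Fin n → ZMod p) → (Fin m → ZMod p))
    (hsurj : Function.Surjective F)
    (hab : IsAlmostBalanced p n m F)
    (hplat : IsPlateaued p n m F) :
    ∃ t : ℕ, Even (n + t) ∧ (∀ b : Fin m → ZMod p, b ≠ 0 → IsTPlateaued p n m F b t) ∧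
      m ≤ (n + t) / 2 := by
  classical
  haveI : Fact p.Prime := ⟨hp⟩
  have hp1 : 1 < p := hp.one_lt
  set Q : ℕ := p ^ m with hQdef
  set N : ℕ := p ^ n with hNdef
  have hQ2 : 2 ≤ Q := by
    calc 2 ≤ p := hp.two_le
    _ = p ^ 1 := (pow_one p).symm
    _ ≤ p ^ m := Nat.pow_le_pow_right hp.pos hm
  have hQR : (1 : ℝ) < (Q : ℝ) := by exact_mod_cast hQ2
  have hQR0 : (0 : ℝ) < (Q : ℝ) := by linarith
  have hQR1 : (0 : ℝ) < (Q : ℝ) - 1 := by linarith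
  -- image is everything
  have him : (imSize p n m F : ℝ) = (Q : ℝ) := by
    rw [imSize, Finset.image_univ_of_surjective hsurj, Finset.card_univ, card_V, hQdef]
  set c : (Fin m → ZMod p) → ℕ := fiberCard p n m F with hc
  set r : ℝ := (p : ℝ) ^ n / (p : ℝ) ^ m with hr
  set δ : (Fin m → ZMod p) → ℝ := fun β => (c β : ℝ) - r with hδ
  set S : ℝ := ∑ β : Fin m → ZMod p, δ β ^ 2 with hS
  have hNb : imbalance p n m F = S := imbalance_eq p n m hp F
  have hpm : ((Q : ℝ)) = (p : ℝ) ^ m := by rw [hQdef]; push_cast; ring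
  have hpn : ((N : ℝ)) = (p : ℝ) ^ n := by rw [hNdef]; push_cast; ring
  -- xi simplification
  have hxi : xi p n m F = Real.sqrt (((Q : ℝ) - 1) * ((Q : ℝ) * S)) / (Q : ℝ) := by
    rw [xi, him, hNb, hpm, sub_self, mul_zero, sub_zero]
  have hSnonneg : 0 ≤ S := Finset.sum_nonneg fun β _ => sq_nonneg _
  have hSpos : 0 < S := by
    rcases lt_or_eq_of_le hSnonneg with h | h
    · exact h
    · exfalso
      apply hab.1
      rw [hxi, ← h, mul_zero, mul_zero, Real.sqrt_zero, zero_div]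
  have hxisq : xi p n m F ^ 2 = ((Q : ℝ) - 1) * S / (Q : ℝ) := by
    rw [hxi, div_pow, Real.sq_sqrt (mul_nonneg (le_of_lt hQR1) (mul_nonneg (le_of_lt hQR0) hSnonneg))]
    field_simp
  -- the distinguished point
  obtain ⟨β0, hβ0⟩ := hab.2
  have hδ0sq : δ β0 ^ 2 = ((Q : ℝ) - 1) * S / (Q : ℝ) := by
    have hr' : (p : ℝ) ^ n / (imSize p n m F : ℝ) = r := by rw [him, hr, hpm]
    rcases hβ0 with h | h
    · rw [← hxisq]
      simp only [hδ]
      rw [← hc] at h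
      rw [h, hr']
      ring
    · rw [← hxisq]
      simp only [hδ]
      rw [← hc] at h
      rw [h, hr']
      ring
  have hδ0ne : δ β0 ≠ 0 := by
    intro h
    rw [h] at hδ0sq
    have h2 : (0:ℝ) < ((Q:ℝ)-1)*S/(Q:ℝ) := div_pos (mul_pos hQR1 hSpos) hQR0
    rw [← hδ0sq] at h2
    norm_num at h2
  -- all other deltas equal μ
  set μ : ℝ := -δ β0 / ((Q : ℝ) - 1) with hμ
  have hcarderase : ((Finset.univ.erase β0).card : ℝ) = (Q : ℝ) - 1 := by
    rw [Finset.card_erase_of_mem (Finset.mem_univ _), Finset.card_univ, card_V]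
    have : (1:ℕ) ≤ p ^ m := le_trans one_le_two hQ2
    push_cast [Nat.cast_sub this]
    rw [hQdef]
    push_cast
    ring
  have hsumδ : ∑ β : Fin m → ZMod p, δ β = 0 := by
    have h1 : ∑ β : Fin m → ZMod p, (c β : ℝ) = (p : ℝ) ^ n := by
      rw [hc, ← Nat.cast_sum, sum_fiberCard]
      push_cast; ring
    have h2 : (Fintype.card (Fin m → ZMod p) : ℝ) = (p : ℝ) ^ m := by
      rw [card_V]; push_cast; ring
    simp only [hδ, Finset.sum_sub_distrib, h1, Finset.sum_const, Finset.card_univ,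
      nsmul_eq_mul, h2, hr]
    field_simp
    ring
  have hsumerase : ∑ β ∈ Finset.univ.erase β0, δ β = -δ β0 := by
    rw [Finset.sum_erase_eq_sub (Finset.mem_univ _), hsumδ]
    ring
  have hsumsq_erase : ∑ β ∈ Finset.univ.erase β0, δ β ^ 2 = S - δ β0 ^ 2 := by
    rw [hS, Finset.sum_erase_eq_sub (Finset.mem_univ _)]
  have hδ0sq' : δ β0 ^ 2 * (Q:ℝ) = ((Q:ℝ) - 1) * S := by
    rw [eq_div_iff (ne_of_gt hQR0)] at hδ0sq
    exact hδ0sq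
  have hμeq : μ * ((Q:ℝ) - 1) = -δ β0 := by
    rw [hμ]
    field_simp
  have hvar : ∑ β ∈ Finset.univ.erase β0, (δ β - μ) ^ 2 = 0 := by
    have expand : ∀ β, (δ β - μ) ^ 2 = δ β ^ 2 - 2 * μ * δ β + μ ^ 2 := fun β => by ring
    have key : (∑ β ∈ Finset.univ.erase β0, (δ β - μ) ^ 2) * ((Q:ℝ) - 1) = 0 := by
      simp only [expand]
      rw [Finset.sum_add_distrib, Finset.sum_sub_distrib, ← Finset.mul_sum, hsumerase,
        hsumsq_erase, Finset.sum_const, nsmul_eq_mul, hcarderase]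
      linear_combination (μ * ((Q:ℝ) - 1) + δ β0) * hμeq - hδ0sq'
    rcases mul_eq_zero.1 key with h | h
    · exact h
    · exact absurd h (ne_of_gt hQR1)
  have hμval : ∀ β : Fin m → ZMod p, β ≠ β0 → δ β = μ := by
    intro β hβ
    have hmem : β ∈ Finset.univ.erase β0 := Finset.mem_erase.2 ⟨hβ, Finset.mem_univ _⟩
    have := (Finset.sum_eq_zero_iff_of_nonneg (fun γ _ => sq_nonneg (δ γ - μ))).1 hvar β hmem
    have := pow_eq_zero_iff (n := 2) (by norm_num) |>.1 this
    linarith [sub_eq_zero.1 this]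
  -- Walsh value at nonzero b
  set A : ℝ := |δ β0 - μ| with hA
  have hWabs : ∀ b : Fin m → ZMod p, b ≠ 0 → ‖walsh p n m F b 0‖ = A := by
    intro b hb
    have hsplit : walsh p n m F b 0
        = ((δ β0 - μ : ℝ) : ℂ) * chi p (∑ i, b i * β0 i) := by
      rw [walsh_zero_eq, ← hc]
      have hterm : ∀ β : Fin m → ZMod p, (c β : ℂ) * chi p (∑ i, b i * β i)
          = ((r + μ : ℝ) : ℂ) * chi p (∑ i, b i * β i)
            + (if β = β0 then ((δ β0 - μ : ℝ) : ℂ) * chi p (∑ i, b i * β0 i) else 0) := by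
        intro β
        by_cases hββ : β = β0
        · subst hββ
          rw [if_pos rfl]
          have h1 : δ β = (c β : ℝ) - r := by rw [hδ]
          have hcast : (c β : ℂ) = ((r + μ : ℝ) : ℂ) + ((δ β - μ : ℝ) : ℂ) := by
            push_cast
            rw [h1]
            push_cast
            ring
          rw [hcast]
          ring
        · rw [if_neg hββ, add_zero]
          have h1 : δ β = (c β : ℝ) - r := by rw [hδ]
          have h2 : δ β = μ := hμval β hββ
          have hcast : (c β : ℂ) = ((r + μ : ℝ) : ℂ) := by
            push_cast
            rw [← h2, h1]
            push_cast
            ring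
          rw [hcast]
      rw [Finset.sum_congr rfl (fun β _ => hterm β), Finset.sum_add_distrib,
        ← Finset.mul_sum, sum_chi_dot p hp hb, mul_zero, zero_add,
        Finset.sum_ite_eq' Finset.univ β0, if_pos (Finset.mem_univ _)]
    rw [hsplit, norm_mul, abs_chi, mul_one, Complex.norm_real, Real.norm_eq_abs, hA]
  have hAval : δ β0 - μ = δ β0 * (Q:ℝ) / ((Q:ℝ) - 1) := by
    rw [hμ]
    field_simp
    ring
  have hApos : 0 < A := by
    rw [hA, abs_pos, hAval]
    intro h
    apply hδ0ne
    rcases div_eq_zero_iff.1 h with h' | h'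
    · rcases mul_eq_zero.1 h' with h'' | h''
      · exact h''
      · exact absurd h'' (ne_of_gt hQR0)
    · exact absurd h' (by intro hq; rw [sub_eq_zero] at hq; exact (ne_of_gt hQR) hq)
  -- choose the reference component
  set i0 : Fin m := ⟨0, hm⟩ with hi0
  set b1 : Fin m → ZMod p := fun i => if i = i0 then 1 else 0 with hb1def
  have hb1 : b1 ≠ 0 := by
    intro h
    have h0 := congrFun h i0
    simp only [hb1def, if_pos rfl, Pi.zero_apply] at h0
    exact one_ne_zero h0
  obtain ⟨t, ht⟩ := hplat b1 hb1
  have hAt : A = Real.sqrt ((p:ℝ) ^ (n + t)) := by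
    rcases ht 0 with h | h
    · rw [hWabs b1 hb1] at h
      exact absurd h (ne_of_gt hApos)
    · rw [← hWabs b1 hb1, h]
  have hA2 : A ^ 2 = (p:ℝ) ^ (n + t) := by
    have hpnn : (0:ℝ) ≤ (p:ℝ) ^ (n + t) := by positivity
    rw [hAt, Real.sq_sqrt hpnn]
  -- integer arithmetic
  set D : ℤ := (Q:ℤ) * (c β0 : ℤ) - (N:ℤ) with hDdef
  have hrN : r * (Q:ℝ) = (N:ℝ) := by
    rw [hr, hpn, hpm]
    field_simp
  have hδ0eq : δ β0 = (c β0 : ℝ) - r := by rw [hδ]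
  have hDR : (D:ℝ) = (Q:ℝ) * δ β0 := by
    rw [hDdef]
    push_cast
    rw [hδ0eq, mul_sub, mul_comm (Q:ℝ) r, hrN]
  have hDsqR : (D:ℝ)^2 = (p:ℝ)^(n+t) * ((Q:ℝ)-1)^2 := by
    have h1 : A * ((Q:ℝ)-1) = |δ β0| * (Q:ℝ) := by
      rw [hA, hAval, abs_div, abs_mul, abs_of_pos hQR0, abs_of_pos hQR1]
      field_simp
    have h2 : (A * ((Q:ℝ)-1))^2 = (D:ℝ)^2 := by
      rw [h1, hDR, mul_pow, mul_pow, sq_abs]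
      ring
    rw [← h2, mul_pow, hA2]
  have hQ1le : 1 ≤ Q := by omega
  have hcastQ1 : ((Q - 1 : ℕ) : ℤ) = (Q:ℤ) - 1 := by
    push_cast [Nat.cast_sub hQ1le]
    ring
  set d : ℕ := D.natAbs with hddef
  have hdD : (d:ℤ)^2 = D^2 := by
    rw [hddef, Int.natAbs_sq]
  have hZeq : (d:ℤ)^2 = (p:ℤ)^(n+t) * ((Q:ℤ)-1)^2 := by
    rw [hdD]
    exact_mod_cast hDsqR
  have hdsqN : d^2 = p^(n+t) * (Q-1)^2 := by
    have h1 : ((d^2 : ℕ):ℤ) = ((p^(n+t) * (Q-1)^2 : ℕ):ℤ) := by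
      push_cast [hcastQ1]
      exact_mod_cast hZeq
    exact_mod_cast h1
  have hQ1pos : 0 < Q - 1 := by omega
  have hdvd1 : (Q-1)^2 ∣ d^2 := ⟨p^(n+t), by rw [hdsqN]; ring⟩
  have hdvd2 : (Q-1) ∣ d := (Nat.pow_dvd_pow_iff two_ne_zero).1 hdvd1
  obtain ⟨e, he⟩ := hdvd2
  have he2 : e^2 = p^(n+t) := by
    have h1 : (Q-1)^2 * e^2 = (Q-1)^2 * p^(n+t) := by
      rw [← mul_pow, ← he, hdsqN]
      ring
    exact Nat.eq_of_mul_eq_mul_left (by positivity) h1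
  have hedvd : e ∣ p^(n+t) := by
    rw [← he2]
    exact dvd_pow_self e two_ne_zero
  obtain ⟨j, hjle, hje⟩ := (Nat.dvd_prime_pow hp).1 hedvd
  have h2j : p^(j+j) = p^(n+t) := by
    rw [pow_add, ← hje, ← sq, he2]
  have hnt : j + j = n + t := Nat.pow_right_injective hp.two_le h2j
  have heven : Even (n + t) := ⟨j, hnt.symm⟩
  have hhalf : (n + t) / 2 = j := by omega
  -- all components are t-plateaued
  have hallplat : ∀ b : Fin m → ZMod p, b ≠ 0 → IsTPlateaued p n m F b t := by
    intro b hb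
    obtain ⟨tb, htb⟩ := hplat b hb
    have hsq : Real.sqrt ((p:ℝ)^(n+tb)) = Real.sqrt ((p:ℝ)^(n+t)) := by
      rcases htb 0 with h | h
      · rw [hWabs b hb] at h
        exact absurd h (ne_of_gt hApos)
      · rw [← h, ← hAt, hWabs b hb]
    intro a
    rcases htb a with h | h
    · exact Or.inl h
    · exact Or.inr (by rw [h, hsq])
  -- the bound m ≤ j
  have hcpos : ∀ β, 1 ≤ c β := fun β => fiberCard_pos p n m F hsurj β
  set β1 : Fin m → ZMod p := β0 + b1 with hβ1def
  have hβ1ne : β1 ≠ β0 := by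
    intro h
    apply hb1
    have : β0 + b1 = β0 + 0 := by rw [add_zero]; exact h
    exact add_left_cancel this
  have hδβ1 : δ β1 = μ := hμval β1 hβ1ne
  have hcβ1R : (c β1 : ℝ) = r + μ := by
    have h2 : δ β1 = (c β1 : ℝ) - r := by rw [hδ]
    rw [hδβ1] at h2
    linarith
  have hkeyR : (Q:ℝ) * ((Q:ℝ)-1) * (c β1 : ℝ) = (N:ℝ) * ((Q:ℝ)-1) - (D:ℝ) := by
    rw [hcβ1R]
    have e1 : (Q:ℝ) * ((Q:ℝ)-1) * (r + μ)
        = (r * (Q:ℝ)) * ((Q:ℝ)-1) + (Q:ℝ) * (μ * ((Q:ℝ)-1)) := by ring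
    rw [e1, hrN, hμeq, hDR]
    ring
  have hkey : (Q:ℤ) * ((Q:ℤ)-1) * (c β1 : ℤ) = (N:ℤ) * ((Q:ℤ)-1) - D := by
    exact_mod_cast hkeyR
  have hdval : d = (Q-1) * p^j := by rw [he, hje]
  have hQZ1 : ((Q:ℤ)-1) ≠ 0 := by
    have : (2:ℤ) ≤ (Q:ℤ) := by exact_mod_cast hQ2
    omega
  have hQZ2 : (2:ℤ) ≤ (Q:ℤ) := by exact_mod_cast hQ2
  have hcb1Z : (1:ℤ) ≤ (c β1 : ℤ) := by exact_mod_cast hcpos β1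
  have hcb0Z : (1:ℤ) ≤ (c β0 : ℤ) := by exact_mod_cast hcpos β0
  have hNZ : (N:ℤ) = (p:ℤ)^n := by rw [hNdef]; push_cast; ring
  have hpZ2 : (2:ℤ) ≤ (p:ℤ) := by exact_mod_cast hp.two_le
  have hpjpos : (0:ℤ) < (p:ℤ)^j := by positivity
  -- main divisibility argument
  have hjn : j < n → ((Q:ℤ) * (c β1 : ℤ) = (N:ℤ) + (p:ℤ)^j ∨
      (Q:ℤ) * (c β1 : ℤ) = (N:ℤ) - (p:ℤ)^j) → m ≤ j := by
    intro hjlt hyp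
    have hsplitpow : p^j * p^(n-j) = N := by
      rw [hNdef, ← pow_add]
      congr 1
      omega
    have h1le : 1 ≤ p^(n-j) := Nat.one_le_pow _ _ hp.pos
    have hpdvdpow : p ∣ p^(n-j) := dvd_pow_self p (by omega)
    rcases hyp with h | h
    · have hNat : Q * c β1 = N + p^j := by exact_mod_cast h
      have heq : Q * c β1 = p^j * (p^(n-j) + 1) := by
        rw [hNat, Nat.mul_add, mul_one, hsplitpow]
      have hdvd : Q ∣ p^j * (p^(n-j)+1) := ⟨c β1, heq.symm⟩
      have hnotdvd : ¬ p ∣ (p^(n-j)+1) := by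
        intro hdp
        have h3 : p ∣ (p^(n-j)+1) - p^(n-j) := Nat.dvd_sub hdp hpdvdpow
        have h4 : (p^(n-j)+1) - p^(n-j) = 1 := by omega
        rw [h4] at h3
        have := Nat.le_of_dvd one_pos h3
        omega
      have hcop : Nat.Coprime Q (p^(n-j)+1) := by
        rw [hQdef]
        exact Nat.Coprime.pow_left m ((Nat.Prime.coprime_iff_not_dvd hp).2 hnotdvd)
      have hQdvd : Q ∣ p^j := hcop.dvd_of_dvd_mul_right hdvd
      rw [hQdef] at hQdvd
      exact (Nat.pow_dvd_pow_iff_le_right hp1).1 hQdvd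
    · have hZ : (Q:ℤ) * (c β1 : ℤ) + (p:ℤ)^j = (N:ℤ) := by linarith [h]
      have hNat : Q * c β1 + p^j = N := by exact_mod_cast hZ
      have heq : Q * c β1 = p^j * (p^(n-j) - 1) := by
        rw [Nat.mul_sub, mul_one, hsplitpow]
        omega
      have hdvd : Q ∣ p^j * (p^(n-j)-1) := ⟨c β1, heq.symm⟩
      have hnotdvd : ¬ p ∣ (p^(n-j)-1) := by
        intro hdp
        have h3 : p ∣ p^(n-j) - (p^(n-j)-1) := Nat.dvd_sub hpdvdpow hdp
        have h4 : p^(n-j) - (p^(n-j)-1) = 1 := by omega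
        rw [h4] at h3
        have := Nat.le_of_dvd one_pos h3
        omega
      have hcop : Nat.Coprime Q (p^(n-j)-1) := by
        rw [hQdef]
        exact Nat.Coprime.pow_left m ((Nat.Prime.coprime_iff_not_dvd hp).2 hnotdvd)
      have hQdvd : Q ∣ p^j := hcop.dvd_of_dvd_mul_right hdvd
      rw [hQdef] at hQdvd
      exact (Nat.pow_dvd_pow_iff_le_right hp1).1 hQdvd
  have hdZ : (d:ℤ) = ((Q:ℤ)-1) * (p:ℤ)^j := by
    rw [hdval]
    push_cast [hcastQ1]
    ring
  refine ⟨t, heven, hallplat, ?_⟩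
  rw [hhalf]
  rcases Int.natAbs_eq D with hsign | hsign
  · -- D = d = (Q-1) p^j  :  Q c β1 = N - p^j
    have hDval : D = ((Q:ℤ)-1) * (p:ℤ)^j := by
      rw [hsign, ← hddef, hdZ]
    have h2 : ((Q:ℤ)-1) * ((Q:ℤ) * (c β1 : ℤ)) = ((Q:ℤ)-1) * ((N:ℤ) - (p:ℤ)^j) := by
      rw [hDval] at hkey
      linear_combination hkey
    have h3 : (Q:ℤ) * (c β1 : ℤ) = (N:ℤ) - (p:ℤ)^j := mul_left_cancel₀ hQZ1 h2
    have hjlt : j < n := by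
      have h0Q : (0:ℤ) ≤ (Q:ℤ) := by positivity
      have h5 : (2:ℤ)*1 ≤ (Q:ℤ) * (c β1 : ℤ) := mul_le_mul hQZ2 hcb1Z one_pos.le h0Q
      have h6 : (p:ℤ)^j < (p:ℤ)^n := by rw [← hNZ]; linarith [h3, h5, hpjpos]
      have h7 : p^j < p^n := by exact_mod_cast h6
      exact (Nat.pow_lt_pow_iff_right hp1).1 h7
    exact hjn hjlt (Or.inr h3)
  · -- D = -d  :  Q c β1 = N + p^j
    have hDval : D = -(((Q:ℤ)-1) * (p:ℤ)^j) := by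
      rw [hsign, ← hddef, hdZ]
    have h2 : ((Q:ℤ)-1) * ((Q:ℤ) * (c β1 : ℤ)) = ((Q:ℤ)-1) * ((N:ℤ) + (p:ℤ)^j) := by
      rw [hDval] at hkey
      linear_combination hkey
    have h3 : (Q:ℤ) * (c β1 : ℤ) = (N:ℤ) + (p:ℤ)^j := mul_left_cancel₀ hQZ1 h2
    have hQc0 : (Q:ℤ) * (c β0 : ℤ) = (N:ℤ) + D := by rw [hDdef]; ring
    have hjlt : j < n := by
      have h0Q : (0:ℤ) ≤ (Q:ℤ) := by positivity
      have h5 : (2:ℤ)*1 ≤ (Q:ℤ) * (c β0 : ℤ) := mul_le_mul hQZ2 hcb0Z one_pos.le h0Q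
      rw [hQc0, hDval] at h5
      have h8 : (1:ℤ)*(p:ℤ)^j ≤ ((Q:ℤ)-1) * (p:ℤ)^j :=
        mul_le_mul (by omega) le_rfl hpjpos.le (by omega)
      have h6 : (p:ℤ)^j < (p:ℤ)^n := by
        rw [← hNZ]
        linarith [h5, h8, hpjpos]
      have h7 : p^j < p^n := by exact_mod_cast h6
      exact (Nat.pow_lt_pow_iff_right hp1).1 h7
    exact hjn hjlt (Or.inl h3)
end
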